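/- For n ≥ 3, let ω = e^{2πi/3} and w(n) = Φ_n(ω)/ω^{φ(n)/2}, where Φ_n is the n-th cyclotomic polynomial. Then w(3m) for m ≥ 3 equals v(m) if v(m) ≡ 1 (mod 3) or v(m) = 3, and −v(m) if v(m) ≡ 2 (mod 3). -/

import Mathlib

open Polynomial Complex

/-- `v n = p` if `n = p ^ k` for a prime `p` and `k ≥ 1`, and `v n = 1` otherwise. -/
def v (n : ℕ) : ℕ := if IsPrimePow n then n.minFac else 1

private lemma evalOneCyc (m : ℕ) (hm : 2 ≤ m) : (cyclotomic m ℤ).eval 1 = (v m : ℤ) := by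
  by_cases hpp : IsPrimePow m
  · obtain ⟨p, k, hp, hk, rfl⟩ := hpp
    rw [← Nat.prime_iff] at hp
    haveI : Fact p.Prime := ⟨hp⟩
    obtain ⟨k, rfl⟩ : ∃ j, k = j + 1 := ⟨k - 1, by omega⟩
    rw [eval_one_cyclotomic_prime_pow]
    simp [v, hp.prime.isPrimePow.pow (Nat.succ_ne_zero k), hp.pow_minFac (Nat.succ_ne_zero k)]
  · rw [eval_one_cyclotomic_not_prime_pow, v, if_neg hpp]
    · simp
    · intro p hp k hpk
      rcases Nat.eq_zero_or_pos k with rfl | hk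
      · simp at hpk; omega
      · exact hpp ⟨p, k, Nat.prime_iff.mp hp, hk, hpk⟩

private lemma vPos (m : ℕ) : 0 < v m := by
  unfold v; split
  · exact Nat.minFac_pos m
  · exact one_pos

private lemma prodPowThree (m : ℕ) (hm : 3 ≤ m) (h3 : ¬ 3 ∣ m) (f : ℂ → ℂ) :
    ∏ ζ ∈ primitiveRoots m ℂ, f (ζ ^ 3) = ∏ ζ ∈ primitiveRoots m ℂ, f ζ := by
  have hco : Nat.Coprime 3 m := (Nat.Prime.coprime_iff_not_dvd Nat.prime_three).mpr h3
  obtain ⟨k, -, hk⟩ := Nat.exists_mul_mod_eq_one_of_coprime hco (by omega)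
  have hmem : ∀ ζ ∈ primitiveRoots m ℂ, IsPrimitiveRoot ζ m := fun ζ h =>
    (mem_primitiveRoots (by omega)).mp h
  have key : ∀ ζ ∈ primitiveRoots m ℂ, (ζ ^ 3) ^ k = ζ := by
    intro ζ h
    have hζ := hmem ζ h
    rw [← pow_mul]
    conv_lhs => rw [← Nat.div_add_mod (3 * k) m]
    rw [pow_add, pow_mul, hζ.pow_eq_one, one_pow, hk, pow_one, one_mul]
  refine Finset.prod_nbij' (fun ζ => ζ ^ 3) (fun ζ => ζ ^ k) ?_ ?_ ?_ ?_ ?_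
  · intro ζ h
    exact (mem_primitiveRoots (by omega : 0 < m)).mpr ((hmem ζ h).pow_of_coprime 3 hco)
  · intro ζ h
    refine (mem_primitiveRoots (by omega : 0 < m)).mpr ((hmem ζ h).pow_of_coprime k ?_)
    obtain ⟨q, hq⟩ : ∃ q, 3 * k = m * q + 1 := by
      have := Nat.div_add_mod (3 * k) m
      exact ⟨3 * k / m, by omega⟩
    have hd : Nat.gcd k m ∣ 1 := by
      have h1 : Nat.gcd k m ∣ 3 * k := Dvd.dvd.mul_left (Nat.gcd_dvd_left k m) 3
      have h2 : Nat.gcd k m ∣ m * q := Dvd.dvd.mul_right (Nat.gcd_dvd_right k m) q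
      have := Nat.dvd_sub h1 h2
      rwa [show 3 * k - m * q = 1 by omega] at this
    exact Nat.dvd_one.mp hd
  · exact key
  · intro ζ h
    show (ζ ^ k) ^ 3 = ζ
    rw [← pow_mul, mul_comm k 3, pow_mul]
    exact key ζ h
  · intros; rfl

private lemma prodInv (m : ℕ) (hm : 0 < m) (f : ℂ → ℂ) :
    ∏ ζ ∈ primitiveRoots m ℂ, f ζ⁻¹ = ∏ ζ ∈ primitiveRoots m ℂ, f ζ := by
  refine Finset.prod_nbij' (fun ζ => ζ⁻¹) (fun ζ => ζ⁻¹) ?_ ?_ ?_ ?_ ?_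
  · intro ζ h
    exact (mem_primitiveRoots hm).mpr ((mem_primitiveRoots hm).mp h).inv
  · intro ζ h
    exact (mem_primitiveRoots hm).mpr ((mem_primitiveRoots hm).mp h).inv
  · intro ζ _; exact inv_inv ζ
  · intro ζ _; exact inv_inv ζ
  · intros; rfl

private lemma evalCycProd {m : ℕ} (hm : 0 < m) (x : ℂ) :
    (cyclotomic m ℂ).eval x = ∏ ζ ∈ primitiveRoots m ℂ, (x - ζ) := by
  rw [cyclotomic_eq_prod_X_sub_primitiveRoots (Complex.isPrimitiveRoot_exp m hm.ne'), eval_prod]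
  simp

private lemma prodRootsOne (m : ℕ) (hm : 3 ≤ m) : ∏ ζ ∈ primitiveRoots m ℂ, ζ = 1 := by
  have h0 : (cyclotomic m ℂ).eval 0 = 1 := by
    rw [← coeff_zero_eq_eval_zero, cyclotomic_coeff_zero ℂ (by omega)]
  rw [evalCycProd (by omega : 0 < m) 0] at h0
  have hcard : (primitiveRoots m ℂ).card = m.totient :=
    (Complex.isPrimitiveRoot_exp m (by omega)).card_primitiveRoots
  have heven : Even m.totient := Nat.totient_even (by omega)
  have : ∏ ζ ∈ primitiveRoots m ℂ, ((0 : ℂ) - ζ) =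
      (-1) ^ m.totient * ∏ ζ ∈ primitiveRoots m ℂ, ζ := by
    rw [← hcard, ← Finset.prod_const (-1 : ℂ), ← Finset.prod_mul_distrib]
    exact Finset.prod_congr rfl fun ζ _ => by ring
  rw [this, heven.neg_one_pow, one_mul] at h0
  exact h0

theorem w_three_mul (m : ℕ) (hm : 3 ≤ m) :
    ((v m % 3 = 1 ∨ v m = 3) →
      ((cyclotomic (3 * m) ℤ).map (Int.castRingHom ℂ)).eval (Complex.exp (2 * Real.pi * I / 3)) /
        (Complex.exp (2 * Real.pi * I / 3)) ^ (Nat.totient (3 * m) / 2) = (v m : ℂ)) ∧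
    (v m % 3 = 2 →
      ((cyclotomic (3 * m) ℤ).map (Int.castRingHom ℂ)).eval (Complex.exp (2 * Real.pi * I / 3)) /
        (Complex.exp (2 * Real.pi * I / 3)) ^ (Nat.totient (3 * m) / 2) = -(v m : ℂ)) := by
  set ω : ℂ := Complex.exp (2 * Real.pi * I / 3) with hωdef
  have hω : IsPrimitiveRoot ω 3 := Complex.isPrimitiveRoot_exp 3 (by norm_num)
  have hω3 : ω ^ 3 = 1 := hω.pow_eq_one
  have hωne : ω ≠ 0 := Complex.exp_ne_zero _
  have hsum : ω ^ 2 + ω + 1 = 0 := by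
    have h := hω.geom_sum_eq_zero (by norm_num)
    simp [Finset.sum_range_succ] at h
    linear_combination h
  have hone : (cyclotomic m ℂ).eval 1 = ((v m : ℤ) : ℂ) := by
    rw [← map_cyclotomic m (Int.castRingHom ℂ), eval_one_map, evalOneCyc m (by omega)]
    simp
  have claim : ∃ e : ℤ, (e = 1 ∨ e = -1) ∧
      (cyclotomic (3 * m) ℂ).eval ω = (e : ℂ) * (v m : ℂ) * ω ^ (Nat.totient (3 * m) / 2) ∧
      (v m = 3 → e = 1) ∧ (v m ≠ 3 → (3 : ℤ) ∣ ((v m : ℤ) - e)) := by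
    by_cases hdvd : 3 ∣ m
    · -- case A
      refine ⟨1, Or.inl rfl, ?_, fun _ => rfl, fun h => ?_⟩
      · have hexp := cyclotomic_expand_eq_cyclotomic Nat.prime_three hdvd ℂ
        have hE : (cyclotomic (m * 3) ℂ).eval ω = (cyclotomic m ℂ).eval 1 := by
          rw [← hexp, expand_eval, hω3]
        obtain ⟨j, hj⟩ := Nat.totient_even (show 2 < m by omega)
        have htot : Nat.totient (3 * m) / 2 = 3 * j := by
          rw [Nat.totient_mul_of_prime_of_dvd Nat.prime_three hdvd]
          omega
        rw [htot, show 3 * m = m * 3 by ring, hE, hone]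
        rw [pow_mul ω 3 j, hω3, one_pow]
        push_cast
        ring
      · -- v m ≠ 3 and 3 ∣ m ⇒ v m = 1
        have hv1 : v m = 1 := by
          unfold v
          split
          · next hpp =>
            exfalso
            obtain ⟨p, k, hp, hk, rfl⟩ := hpp
            rw [← Nat.prime_iff] at hp
            have h3p : 3 = p :=
              (Nat.prime_dvd_prime_iff_eq Nat.prime_three hp).mp
                (Nat.prime_three.dvd_of_dvd_pow hdvd)
            apply h
            unfold v
            rw [if_pos ⟨p, k, Nat.prime_iff.mp hp, hk, rfl⟩, hp.pow_minFac hk.ne', h3p]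
          · rfl
        rw [hv1]
        simp
    · -- case B
      have hm0 : (0 : ℕ) < m := by omega
      have hcard : (primitiveRoots m ℂ).card = m.totient :=
        (Complex.isPrimitiveRoot_exp m hm0.ne').card_primitiveRoots
      have heven : Even m.totient := Nat.totient_even (by omega)
      have hprod1 : ∏ ζ ∈ primitiveRoots m ℂ, ζ = 1 := prodRootsOne m hm
      have honene : (cyclotomic m ℂ).eval 1 ≠ 0 := by
        rw [hone]
        norm_cast
        exact (vPos m).ne'
      -- (A) Φ(ω)Φ(ω²) = 1
      have hA : (cyclotomic m ℂ).eval ω * ((cyclotomic m ℂ).eval (ω ^ 2) *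
          (cyclotomic m ℂ).eval 1) = (cyclotomic m ℂ).eval 1 := by
        rw [evalCycProd hm0 ω, evalCycProd hm0 (ω ^ 2), evalCycProd hm0 1,
          ← Finset.prod_mul_distrib, ← Finset.prod_mul_distrib]
        rw [Finset.prod_congr rfl (fun ζ _ => show (ω - ζ) * ((ω ^ 2 - ζ) * (1 - ζ)) = 1 - ζ ^ 3 by
          linear_combination (1 - ζ) * hω3 + (-ζ * (1 - ζ)) * hsum)]
        simpa using prodPowThree m hm hdvd (fun z => 1 - z)
      have hAB : (cyclotomic m ℂ).eval ω * (cyclotomic m ℂ).eval (ω ^ 2) = 1 := by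
        apply mul_right_cancel₀ honene
        rw [one_mul]
        linear_combination hA
      -- (B) palindrome
      have hB : ω ^ m.totient * (cyclotomic m ℂ).eval (ω ^ 2) = (cyclotomic m ℂ).eval ω := by
        rw [evalCycProd hm0 (ω ^ 2), evalCycProd hm0 ω]
        calc ω ^ m.totient * ∏ ζ ∈ primitiveRoots m ℂ, (ω ^ 2 - ζ)
            = ∏ ζ ∈ primitiveRoots m ℂ, (ω * (ω ^ 2 - ζ)) := by
              rw [Finset.prod_mul_distrib, Finset.prod_const, hcard]
          _ = ∏ ζ ∈ primitiveRoots m ℂ, (1 - ω * ζ) :=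
              Finset.prod_congr rfl fun ζ _ => by linear_combination hω3
          _ = ∏ ζ ∈ primitiveRoots m ℂ, (1 - ω * ζ⁻¹) :=
              (prodInv m hm0 (fun z => 1 - ω * z)).symm
          _ = ∏ ζ ∈ primitiveRoots m ℂ, (ζ⁻¹ * (ζ - ω)) := by
              refine Finset.prod_congr rfl fun ζ hζ => ?_
              have hζ0 : ζ ≠ 0 :=
                ((mem_primitiveRoots hm0).mp hζ).ne_zero hm0.ne'
              field_simp
          _ = (∏ ζ ∈ primitiveRoots m ℂ, ζ⁻¹) * ∏ ζ ∈ primitiveRoots m ℂ, (ζ - ω) :=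
              Finset.prod_mul_distrib
          _ = ∏ ζ ∈ primitiveRoots m ℂ, (ζ - ω) := by
              rw [Finset.prod_inv_distrib, hprod1, inv_one, one_mul]
          _ = (-1) ^ m.totient * ∏ ζ ∈ primitiveRoots m ℂ, (ω - ζ) := by
              rw [← hcard, ← Finset.prod_const (-1 : ℂ), ← Finset.prod_mul_distrib]
              exact Finset.prod_congr rfl fun ζ _ => by ring
          _ = ∏ ζ ∈ primitiveRoots m ℂ, (ω - ζ) := by rw [heven.neg_one_pow, one_mul]
      -- remainder of cyclotomic m ℤ mod X^2+X+1
      set P : ℤ[X] := cyclotomic m ℤ with hP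
      have hD : (X ^ 2 + X + 1 : ℤ[X]).Monic := by
        rw [show (X ^ 2 + X + 1 : ℤ[X]) = X ^ 2 + (X + C 1) by simp; ring]
        refine monic_X_pow_add ?_
        rw [degree_X_add_C]
        norm_cast
      set D : ℤ[X] := X ^ 2 + X + 1 with hDdef
      set q : ℤ[X] := P /ₘ D with hq
      set r : ℤ[X] := P %ₘ D with hr
      have hPDr : r + D * q = P := modByMonic_add_div P D
      have hDdeg : D.degree = 2 := by
        rw [hDdef, show (X ^ 2 + X + 1 : ℤ[X]) = C 1 * X ^ 2 + C 1 * X + C 1 by simp]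
        exact degree_quadratic one_ne_zero
      have hrdeg : r.degree ≤ 1 := by
        have hlt : r.degree < 2 := by
          rw [← hDdeg]; exact degree_modByMonic_lt P hD
        rw [degree_le_iff_coeff_zero]
        intro N hN
        apply coeff_eq_zero_of_degree_lt
        refine lt_of_lt_of_le hlt ?_
        have h2N : 2 ≤ N := by exact_mod_cast hN
        exact_mod_cast h2N
      have hrr : r = C (r.coeff 1) * X + C (r.coeff 0) := eq_X_add_C_of_degree_le_one hrdeg
      set a : ℤ := r.coeff 0 with ha
      set b : ℤ := r.coeff 1 with hb
      -- integer congruence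
      have hint : P.eval 1 = 3 * q.eval 1 + (a + b) := by
        conv_lhs => rw [← hPDr]
        rw [eval_add, eval_mul]
        rw [show r.eval 1 = b + a by rw [hrr]; simp]
        rw [show D.eval 1 = 3 by rw [hDdef]; simp]
        ring
      -- complex evaluation
      have hcx : (cyclotomic m ℂ).eval ω = (a : ℂ) + b * ω := by
        rw [← map_cyclotomic m (Int.castRingHom ℂ), ← hP, ← hPDr, Polynomial.map_add,
          Polynomial.map_mul, eval_add, eval_mul]
        have hDev : ((D.map (Int.castRingHom ℂ))).eval ω = 0 := by
          rw [hDdef]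
          simp only [Polynomial.map_add, Polynomial.map_pow, Polynomial.map_one, map_X,
            eval_add, eval_pow, eval_X, eval_one]
          linear_combination hsum
        rw [hDev, zero_mul, add_zero]
        conv_lhs => rw [hrr]
        simp only [Polynomial.map_add, Polynomial.map_mul, Polynomial.map_C, Polynomial.map_X,
          eval_add, eval_mul, eval_C, eval_X]
        simp only [eq_intCast]
        ring
      -- powers of ω
      set T : ℕ := m.totient with hT
      have hpowmod : ω ^ T = ω ^ (T % 3) := by
        conv_lhs => rw [← Nat.div_add_mod T 3]
        rw [pow_add, pow_mul, hω3, one_pow, one_mul]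
      have h3pow : ω ^ T * ω ^ T * ω ^ T = 1 := by
        rw [show ω ^ T * ω ^ T * ω ^ T = (ω ^ 3) ^ T by ring, hω3, one_pow]
      -- u² = 1
      set u : ℂ := (cyclotomic m ℂ).eval ω * ω ^ T with hu
      have hu2 : u * u = 1 := by
        have e1 : u * u = ((cyclotomic m ℂ).eval ω * (cyclotomic m ℂ).eval (ω ^ 2)) *
            (ω ^ T * ω ^ T * ω ^ T) := by
          rw [hu]
          nth_rewrite 1 [← hB]
          ring
        rw [e1, hAB, h3pow, one_mul]
      have hu1 : u = 1 ∨ u = -1 := mul_self_eq_one_iff.mp hu2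
      -- linear independence helper
      have hωim : ω.im ≠ 0 := by
        have hrw : (2 * (Real.pi : ℂ) * I / 3) = ((2 * Real.pi / 3 : ℝ) : ℂ) * I := by
          push_cast; ring
        rw [hωdef, hrw, exp_ofReal_mul_I_im]
        have hpi := Real.pi_pos
        have : 0 < Real.sin (2 * Real.pi / 3) :=
          Real.sin_pos_of_pos_of_lt_pi (by linarith) (by linarith)
        linarith
      have hlin : ∀ x y e : ℤ, (x : ℂ) + y * ω = (e : ℂ) → x = e ∧ y = 0 := by
        intro x y e h
        have him := congrArg Complex.im h
        simp only [Complex.add_im, Complex.mul_im, Complex.intCast_im, Complex.intCast_re,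
          zero_add, zero_mul, add_zero] at him
        have hy : (y : ℝ) = 0 := by
          rcases mul_eq_zero.mp him with h' | h'
          · exact h'
          · exact absurd h' hωim
        have hy0 : y = 0 := by exact_mod_cast hy
        subst hy0
        constructor
        · have : (x : ℂ) = (e : ℂ) := by rw [← h]; push_cast; ring
          exact_mod_cast this
        · rfl
      -- determine e
      have hTlt : T % 3 = 0 ∨ T % 3 = 1 ∨ T % 3 = 2 := by omega
      have hueq : u = ((a : ℂ) + b * ω) * ω ^ (T % 3) := by
        rw [hu, hcx, hpowmod]
      obtain ⟨e, he1, hue, hdvd3⟩ :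
          ∃ e : ℤ, (e = 1 ∨ e = -1) ∧ u = (e : ℂ) ∧ (3 : ℤ) ∣ (a + b - e) := by
        rcases hTlt with h0 | h1 | h2
        · rw [h0, pow_zero, mul_one] at hueq
          rcases hu1 with h | h
          · obtain ⟨hA', hB'⟩ := hlin a b 1 (by rw [← hueq, h]; norm_num)
            exact ⟨1, Or.inl rfl, by rw [h]; norm_num, by omega⟩
          · obtain ⟨hA', hB'⟩ := hlin a b (-1) (by rw [← hueq, h]; push_cast; ring)
            exact ⟨-1, Or.inr rfl, by rw [h]; push_cast; ring, by omega⟩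
        · rw [h1, pow_one] at hueq
          have hueq' : u = ((-b : ℤ) : ℂ) + ((a - b : ℤ) : ℂ) * ω := by
            rw [hueq]; push_cast; linear_combination (b : ℂ) * hsum
          rcases hu1 with h | h
          · obtain ⟨hA', hB'⟩ := hlin (-b) (a - b) 1 (by rw [← hueq', h]; norm_num)
            exact ⟨1, Or.inl rfl, by rw [h]; norm_num, by omega⟩
          · obtain ⟨hA', hB'⟩ := hlin (-b) (a - b) (-1) (by rw [← hueq', h]; push_cast; ring)
            exact ⟨-1, Or.inr rfl, by rw [h]; push_cast; ring, by omega⟩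
        · rw [h2] at hueq
          have hueq' : u = ((b - a : ℤ) : ℂ) + ((-a : ℤ) : ℂ) * ω := by
            rw [hueq]; push_cast; linear_combination (a : ℂ) * hsum + (b : ℂ) * hω3
          rcases hu1 with h | h
          · obtain ⟨hA', hB'⟩ := hlin (b - a) (-a) 1 (by rw [← hueq', h]; norm_num)
            exact ⟨1, Or.inl rfl, by rw [h]; norm_num, by omega⟩
          · obtain ⟨hA', hB'⟩ := hlin (b - a) (-a) (-1) (by rw [← hueq', h]; push_cast; ring)
            exact ⟨-1, Or.inr rfl, by rw [h]; push_cast; ring, by omega⟩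
      -- v m ≠ 3 here
      have hvne3 : v m ≠ 3 := by
        intro h3
        unfold v at h3
        by_cases hpp : IsPrimePow m
        · rw [if_pos hpp] at h3
          exact hdvd (h3 ▸ Nat.minFac_dvd m)
        · rw [if_neg hpp] at h3; omega
      -- divisibility for v m
      have hVint : P.eval 1 = (v m : ℤ) := evalOneCyc m (by omega)
      have hcong : (3 : ℤ) ∣ ((v m : ℤ) - e) := by
        obtain ⟨c, hc⟩ := hdvd3
        exact ⟨q.eval 1 + c, by omega⟩
      -- expand relation
      have hexp := cyclotomic_expand_eq_cyclotomic_mul Nat.prime_three hdvd ℂ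
      have hE : (cyclotomic m ℂ).eval 1 =
          (cyclotomic (m * 3) ℂ).eval ω * (cyclotomic m ℂ).eval ω := by
        have h' := congrArg (eval ω) hexp
        rwa [expand_eval, hω3, eval_mul] at h'
      have htot : Nat.totient (3 * m) / 2 = T := by
        rw [hT, Nat.totient_mul (Nat.Prime.coprime_iff_not_dvd Nat.prime_three |>.mpr hdvd),
          Nat.totient_prime Nat.prime_three]
        omega
      refine ⟨e, he1, ?_, fun h3 => absurd h3 hvne3, fun _ => hcong⟩
      rw [htot, show 3 * m = m * 3 by ring]
      -- Φ_{3m}(ω) = e * v * ω^T  from  Φ_{3m}(ω) * u = v * ω^T and u = e, e² = 1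
      have key : (cyclotomic (m * 3) ℂ).eval ω * u = ((v m : ℤ) : ℂ) * ω ^ T := by
        rw [hu, ← mul_assoc, ← hE, hone]
      rw [hue] at key
      have he2 : (e : ℂ) * (e : ℂ) = 1 := by
        rcases he1 with rfl | rfl <;> norm_num
      have := congrArg (fun z => z * (e : ℂ)) key
      beta_reduce at this
      rw [mul_assoc, mul_comm (e : ℂ) (e : ℂ)] at this
      rw [he2, mul_one] at this
      rw [this]
      push_cast
      ring
  obtain ⟨e, he1, hkey, hv3, hcong⟩ := claim
  have hpowne : ω ^ (Nat.totient (3 * m) / 2) ≠ 0 := pow_ne_zero _ hωne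
  have hmapc : ((cyclotomic (3 * m) ℤ).map (Int.castRingHom ℂ)) = cyclotomic (3 * m) ℂ :=
    map_cyclotomic _ _
  constructor
  · intro h
    have he : e = 1 := by
      rcases h with h1 | h3
      · rcases he1 with rfl | rfl
        · rfl
        · exfalso
          have hne3 : v m ≠ 3 := by omega
          have := hcong hne3
          omega
      · exact hv3 h3
    rw [hmapc, hkey, he, mul_div_assoc, div_self hpowne, mul_one]
    push_cast; ring
  · intro h2
    have he : e = -1 := by
      rcases he1 with rfl | rfl
      · exfalso
        have hne3 : v m ≠ 3 := by omega
        have := hcong hne3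
        omega
      · rfl
    rw [hmapc, hkey, he, mul_div_assoc, div_self hpowne, mul_one]
    push_cast; ring
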